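/- arXiv:1201.1798 — 3 statements merged into one kernel-verified Lean document; each statement's English description precedes it below -/
import Mathlib

section
/- Let d ≥ 1, let p ≥ 2 be an integer, and let V_1, …, V_n (n ≥ 2) be nonzero proper linear subspaces of ℝ^d with positive weights ω_1, …, ω_n; set m := Σ_{j=1}^n ω_j·dim(V_j) and assume m²/d − Σ_{j=1}^n ω_j²·dim(V_j) ≥ 0. Then FFP({(V_j, ω_j)}_{j=1}^n, p) = (m²/d − Σ_{j=1}^n ω_j²·dim(V_j))^p / (Σ_{i≠j} ω_i ω_j)^{p−1} + Σ_{j=1}^n ω_j²·dim(V_j)^p holds if and only if {(V_j, ω_j)}_{j=1}^n is an equiangular tight fusion frame, i.e. ⟨P_{V_i}, P_{V_j}⟩ takes the same value for all i ≠ j and Σ_{j=1}^n ω_j P_{V_j} = (m/d)·Id. -/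
open scoped BigOperators
open RealInnerProductSpace Matrix

/-- The orthogonal projection onto a subspace `V` of `ℝ^d`, as a linear endomorphism. -/
noncomputable def proj {d : ℕ} (V : Submodule ℝ (EuclideanSpace ℝ (Fin d))) :
    EuclideanSpace ℝ (Fin d) →ₗ[ℝ] EuclideanSpace ℝ (Fin d) :=
  V.subtype ∘ₗ (V.orthogonalProjection).toLinearMap

/-- `⟨P_V, P_W⟩ = trace (P_V P_W)`. -/
noncomputable def trPP {d : ℕ} (V W : Submodule ℝ (EuclideanSpace ℝ (Fin d))) : ℝ :=
  LinearMap.trace ℝ _ (proj V ∘ₗ proj W)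

/-- The `p`-fusion frame potential. -/
noncomputable def FFP {d n : ℕ} (V : Fin n → Submodule ℝ (EuclideanSpace ℝ (Fin d)))
    (ω : Fin n → ℝ) (p : ℕ) : ℝ :=
  ∑ i, ∑ j, ω i * ω j * trPP (V i) (V j) ^ p

section aux
variable {d : ℕ}

lemma trace_transpose_mul_sq (N : Matrix (Fin d) (Fin d) ℝ) :
    (Nᵀ * N).trace = ∑ i, ∑ j, (N i j)^2 := by
  rw [Finset.sum_comm]
  simp [Matrix.trace, Matrix.diag, Matrix.mul_apply, Matrix.transpose_apply, sq]

lemma proj_comp_self (V : Submodule ℝ (EuclideanSpace ℝ (Fin d))) :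
    proj V ∘ₗ proj V = proj V := by
  ext x
  simp [proj, Submodule.orthogonalProjection_mem_subspace_eq_self, (Submodule.starProjection_eq_self_iff (K := V)).mpr (V.starProjection_apply_mem x)]

lemma isProj_proj (V : Submodule ℝ (EuclideanSpace ℝ (Fin d))) :
    LinearMap.IsProj V (proj V) := by
  refine ⟨fun x => (V.orthogonalProjection x).2, fun x hx => ?_⟩
  show ((V.orthogonalProjection x : V) : EuclideanSpace ℝ (Fin d)) = x
  rw [show x = ((⟨x, hx⟩ : V) : EuclideanSpace ℝ (Fin d)) from rfl,
    Submodule.orthogonalProjection_mem_subspace_eq_self]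

lemma trace_proj (V : Submodule ℝ (EuclideanSpace ℝ (Fin d))) :
    LinearMap.trace ℝ _ (proj V) = (Module.finrank ℝ V : ℝ) :=
  (isProj_proj V).trace

noncomputable def matOf {d : ℕ} :
    (EuclideanSpace ℝ (Fin d) →ₗ[ℝ] EuclideanSpace ℝ (Fin d)) ≃ₗ[ℝ] Matrix (Fin d) (Fin d) ℝ :=
  LinearMap.toMatrix (EuclideanSpace.basisFun (Fin d) ℝ).toBasis
    (EuclideanSpace.basisFun (Fin d) ℝ).toBasis

lemma matOf_apply (f : EuclideanSpace ℝ (Fin d) →ₗ[ℝ] EuclideanSpace ℝ (Fin d)) (i j : Fin d) :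
    matOf f i j = f (EuclideanSpace.single j 1) i := by
  simp [matOf, LinearMap.toMatrix_apply, OrthonormalBasis.coe_toBasis_repr_apply,
    EuclideanSpace.basisFun_repr, OrthonormalBasis.coe_toBasis, EuclideanSpace.basisFun_apply]

lemma matOf_comp (f g : EuclideanSpace ℝ (Fin d) →ₗ[ℝ] EuclideanSpace ℝ (Fin d)) :
    matOf (f ∘ₗ g) = matOf f * matOf g :=
  LinearMap.toMatrix_comp _ _ _ f g

lemma matOf_id : matOf (LinearMap.id : EuclideanSpace ℝ (Fin d) →ₗ[ℝ] EuclideanSpace ℝ (Fin d))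
    = 1 := LinearMap.toMatrix_id _

lemma trace_eq_matOf (f : EuclideanSpace ℝ (Fin d) →ₗ[ℝ] EuclideanSpace ℝ (Fin d)) :
    LinearMap.trace ℝ _ f = (matOf f).trace :=
  LinearMap.trace_eq_matrix_trace ℝ _ f

lemma matOf_proj_symm (V : Submodule ℝ (EuclideanSpace ℝ (Fin d))) :
    (matOf (proj V))ᵀ = matOf (proj V) := by
  have hsym : ∀ x y : EuclideanSpace ℝ (Fin d), ⟪proj V x, y⟫ = ⟪x, proj V y⟫ :=
    fun x y => Submodule.inner_starProjection_left_eq_right V x y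
  have h1 : ∀ (v : EuclideanSpace ℝ (Fin d)) (k : Fin d),
      v k = ⟪EuclideanSpace.single k (1:ℝ), v⟫ := by
    intro v k; simp [EuclideanSpace.inner_single_left]
  ext i j
  rw [Matrix.transpose_apply, matOf_apply, matOf_apply,
    h1 ((proj V) (EuclideanSpace.single i 1)) j, h1 ((proj V) (EuclideanSpace.single j 1)) i,
    real_inner_comm, hsym]

lemma matOf_proj_idem (V : Submodule ℝ (EuclideanSpace ℝ (Fin d))) :
    matOf (proj V) * matOf (proj V) = matOf (proj V) := by
  rw [← matOf_comp, proj_comp_self]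

lemma trPP_eq (V W : Submodule ℝ (EuclideanSpace ℝ (Fin d))) :
    trPP V W = (matOf (proj V) * matOf (proj W)).trace := by
  rw [trPP, trace_eq_matOf, matOf_comp]

lemma trPP_diag (V : Submodule ℝ (EuclideanSpace ℝ (Fin d))) :
    trPP V V = (Module.finrank ℝ V : ℝ) := by
  rw [trPP, proj_comp_self, trace_proj]

lemma matOf_proj_trace (V : Submodule ℝ (EuclideanSpace ℝ (Fin d))) :
    (matOf (proj V)).trace = (Module.finrank ℝ V : ℝ) := by
  rw [← trace_eq_matOf, trace_proj]

lemma trPP_nonneg (V W : Submodule ℝ (EuclideanSpace ℝ (Fin d))) :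
    0 ≤ trPP V W := by
  rw [trPP_eq]
  set A := matOf (proj V)
  set B := matOf (proj W)
  have h1 : (B * A)ᵀ = A * B := by
    rw [Matrix.transpose_mul, matOf_proj_symm, matOf_proj_symm]
  have h2 : A * B * (B * A) = A * B * A := by
    rw [← Matrix.mul_assoc, Matrix.mul_assoc A B B, matOf_proj_idem]
  have key : (A * B).trace = ((B * A)ᵀ * (B * A)).trace := by
    rw [h1, h2, Matrix.trace_mul_cycle A B A, matOf_proj_idem]
  rw [key, trace_transpose_mul_sq]
  positivity

lemma cs_matrix (hd : 0 < d) (T : Matrix (Fin d) (Fin d) ℝ) (hT : Tᵀ = T) :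
    (T.trace)^2 / d ≤ (T*T).trace ∧
      ((T*T).trace = (T.trace)^2 / d ↔ T = (T.trace / d) • (1 : Matrix (Fin d) (Fin d) ℝ)) := by
  have hd' : (d:ℝ) ≠ 0 := by positivity
  set c : ℝ := T.trace / d with hc
  set N := T - c • (1 : Matrix (Fin d) (Fin d) ℝ) with hN
  have hNt : Nᵀ = N := by
    rw [hN, Matrix.transpose_sub, hT, Matrix.transpose_smul, Matrix.transpose_one]
  have hNN : N * N = T * T - c • T - c • T + (c * c) • (1 : Matrix (Fin d) (Fin d) ℝ) := by
    rw [hN]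
    simp only [Matrix.sub_mul, Matrix.mul_sub, Matrix.smul_mul, Matrix.mul_smul,
      Matrix.one_mul, Matrix.mul_one, smul_sub, smul_add, smul_smul]
    abel
  have htr1 : (1 : Matrix (Fin d) (Fin d) ℝ).trace = (d : ℝ) := by
    simp [Matrix.trace_one]
  have htrN : (Nᵀ * N).trace = (T*T).trace - (T.trace)^2 / d := by
    rw [hNt, hNN]
    simp only [Matrix.trace_add, Matrix.trace_sub, Matrix.trace_smul, htr1, smul_eq_mul]
    rw [hc]
    field_simp
    ring
  have hsum := trace_transpose_mul_sq N
  have h0 : 0 ≤ (Nᵀ * N).trace := by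
    rw [hsum]; positivity
  refine ⟨by linarith, ?_, ?_⟩
  · intro h
    have hz : (Nᵀ * N).trace = 0 := by rw [htrN, h]; ring
    rw [hsum] at hz
    have hzero : ∀ i ∈ Finset.univ, ∑ j, (N i j)^2 = 0 := by
      rw [← Finset.sum_eq_zero_iff_of_nonneg (fun i _ => by positivity)]
      exact hz
    have hzero2 : ∀ i j, N i j = 0 := by
      intro i j
      have := (Finset.sum_eq_zero_iff_of_nonneg
        (fun j _ => sq_nonneg (N i j))).1 (hzero i (Finset.mem_univ i)) j (Finset.mem_univ j)
      exact pow_eq_zero_iff (n := 2) (by norm_num) |>.1 this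
    have : N = 0 := by ext i j; exact hzero2 i j
    rw [hN, sub_eq_zero] at this
    exact this
  · intro h
    have hN0 : N = 0 := by rw [hN, ← h, sub_self]
    have : (Nᵀ * N).trace = 0 := by rw [hN0]; simp
    rw [htrN] at this
    linarith

end aux

theorem stmt2 {d n : ℕ} (hd : 1 ≤ d) (hn : 2 ≤ n) (p : ℕ) (hp : 2 ≤ p)
    (V : Fin n → Submodule ℝ (EuclideanSpace ℝ (Fin d)))
    (hVbot : ∀ j, V j ≠ ⊥) (hVtop : ∀ j, V j ≠ ⊤)
    (ω : Fin n → ℝ) (hω : ∀ j, 0 < ω j)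
    (m : ℝ) (hm : m = ∑ j, ω j * (Module.finrank ℝ (V j) : ℝ))
    (hpos : 0 ≤ m ^ 2 / d - ∑ j, ω j ^ 2 * (Module.finrank ℝ (V j) : ℝ)) :
    FFP V ω p =
      (m ^ 2 / d - ∑ j, ω j ^ 2 * (Module.finrank ℝ (V j) : ℝ)) ^ p /
        (∑ ij ∈ Finset.univ.offDiag (α := Fin n), ω ij.1 * ω ij.2) ^ (p - 1) +
      ∑ j, ω j ^ 2 * (Module.finrank ℝ (V j) : ℝ) ^ p
    ↔
    ((∃ c : ℝ, ∀ i j, i ≠ j → trPP (V i) (V j) = c) ∧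
      ∑ j, ω j • proj (V j) =
        (m / d) • (LinearMap.id : EuclideanSpace ℝ (Fin d) →ₗ[ℝ] EuclideanSpace ℝ (Fin d))) := by
  classical
  have hd0 : (0:ℝ) < d := by exact_mod_cast hd
  have hdne : (d:ℝ) ≠ 0 := ne_of_gt hd0
  have hp0 : p ≠ 0 := by omega
  set t := (Finset.univ : Finset (Fin n)).offDiag with ht
  set a : Fin n × Fin n → ℝ := fun ij => trPP (V ij.1) (V ij.2) with ha
  set W := ∑ ij ∈ t, ω ij.1 * ω ij.2 with hWdef
  set D := ∑ j, ω j ^ 2 * (Module.finrank ℝ (V j) : ℝ) with hDdef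
  set S := m ^ 2 / (d:ℝ) - D with hSdef
  -- a distinguished off-diagonal pair
  have hij0mem : ((⟨0, by omega⟩ : Fin n), (⟨1, by omega⟩ : Fin n)) ∈ t := by
    rw [ht]; simp [Finset.mem_offDiag, Fin.ext_iff]
  have hW : 0 < W := by
    rw [hWdef]
    exact Finset.sum_pos (fun ij _ => mul_pos (hω _) (hω _)) ⟨_, hij0mem⟩
  -- matrices
  set A : Fin n → Matrix (Fin d) (Fin d) ℝ := fun j => matOf (proj (V j)) with hA
  set T : Matrix (Fin d) (Fin d) ℝ := ∑ j, ω j • A j with hT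
  have hTsymm : Tᵀ = T := by
    rw [hT, Matrix.transpose_sum]
    exact Finset.sum_congr rfl fun j _ => by
      rw [Matrix.transpose_smul]; simp only [hA]; rw [matOf_proj_symm]
  have hTtr : T.trace = m := by
    rw [hT, Matrix.trace_sum, hm]
    exact Finset.sum_congr rfl fun j _ => by
      rw [Matrix.trace_smul]; simp only [hA]; rw [matOf_proj_trace, smul_eq_mul]
  have hTT : (T * T).trace = ∑ i, ∑ j, ω i * ω j * a (i, j) := by
    rw [hT, Finset.sum_mul_sum, Matrix.trace_sum]
    refine Finset.sum_congr rfl fun i _ => ?_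
    rw [Matrix.trace_sum]
    refine Finset.sum_congr rfl fun j _ => ?_
    rw [Matrix.smul_mul, Matrix.mul_smul, smul_smul, Matrix.trace_smul, smul_eq_mul]
    simp only [ha, hA]
    rw [← trPP_eq]
  have hsplit : ∀ g : Fin n → Fin n → ℝ,
      (∑ i, ∑ j, g i j) = (∑ ij ∈ t, g ij.1 ij.2) + ∑ j, g j j := by
    intro g
    rw [ht, ← Finset.sum_product' Finset.univ Finset.univ g,
      ← Finset.diag_union_offDiag (Finset.univ : Finset (Fin n)),
      Finset.sum_union (Finset.disjoint_diag_offDiag _), Finset.sum_diag, add_comm]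
  set Q := ∑ ij ∈ t, ω ij.1 * ω ij.2 * a ij with hQdef
  set R := ∑ ij ∈ t, ω ij.1 * ω ij.2 * a ij ^ p with hRdef
  have hQD : (T*T).trace = Q + D := by
    rw [hTT, hsplit (fun i j => ω i * ω j * a (i, j))]
    congr 1
    rw [hDdef]
    refine Finset.sum_congr rfl fun j _ => ?_
    simp only [ha]
    rw [trPP_diag]; ring
  obtain ⟨hCS, hCSeq⟩ := cs_matrix (by omega : 0 < d) T hTsymm
  rw [hTtr] at hCS hCSeq
  have hQS : S ≤ Q := by rw [hSdef]; linarith [hCS, hQD]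
  have hSnn : 0 ≤ S := hpos
  have hFFP : FFP V ω p = R + ∑ j, ω j ^ 2 * (Module.finrank ℝ (V j) : ℝ) ^ p := by
    rw [FFP, hsplit (fun i j => ω i * ω j * trPP (V i) (V j) ^ p)]
    congr 1
    refine Finset.sum_congr rfl fun j _ => ?_
    rw [trPP_diag]; ring
  -- Jensen setup
  set w : Fin n × Fin n → ℝ := fun ij => ω ij.1 * ω ij.2 / W with hw
  have hwpos : ∀ ij ∈ t, 0 < w ij := fun ij _ => by
    simp only [hw]; exact div_pos (mul_pos (hω _) (hω _)) hW
  have hwsum : ∑ ij ∈ t, w ij = 1 := by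
    simp only [hw]
    rw [← Finset.sum_div, ← hWdef, div_self (ne_of_gt hW)]
  have hmem : ∀ ij ∈ t, a ij ∈ Set.Ici (0:ℝ) := fun ij _ => by
    simp only [ha, Set.mem_Ici]; exact trPP_nonneg _ _
  have hwa : ∑ ij ∈ t, w ij * a ij = Q / W := by
    rw [hQdef, Finset.sum_div]
    refine Finset.sum_congr rfl fun ij _ => ?_
    simp only [hw]; ring
  have hwap : ∑ ij ∈ t, w ij * a ij ^ p = R / W := by
    rw [hRdef, Finset.sum_div]
    refine Finset.sum_congr rfl fun ij _ => ?_
    simp only [hw]; ring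
  have hconv := strictConvexOn_pow hp
  have hpow : ∀ x : ℝ, W * (x / W) ^ p = x ^ p / W ^ (p - 1) := by
    intro x
    have hp1 : p - 1 + 1 = p := Nat.succ_pred_eq_of_pos (Nat.pos_of_ne_zero hp0)
    rw [div_pow, ← hp1, pow_succ]
    have h1 : W ^ (p-1) ≠ 0 := pow_ne_zero _ (ne_of_gt hW)
    field_simp
    rw [Nat.add_sub_cancel, pow_succ]; ring
  have hQnn : 0 ≤ Q := le_trans hSnn hQS
  have hJ : W * (Q / W) ^ p ≤ R := by
    have h := hconv.convexOn.map_sum_le (fun ij hij => (hwpos ij hij).le) hwsum hmem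
    simp only [smul_eq_mul] at h
    rw [hwa, hwap] at h
    calc W * (Q / W) ^ p ≤ W * (R / W) := mul_le_mul_of_nonneg_left h hW.le
      _ = R := by field_simp
  have hchain2 : S ^ p / W ^ (p-1) ≤ W * (Q / W) ^ p := by
    rw [← hpow S]
    apply mul_le_mul_of_nonneg_left _ (le_of_lt hW)
    apply pow_le_pow_left₀ (div_nonneg hSnn hW.le)
    gcongr
  rw [hFFP, add_left_inj]
  constructor
  · intro heq
    -- all inequalities are equalities
    have e2 : W * (Q / W) ^ p = R := le_antisymm hJ (by rw [heq]; exact hchain2)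
    have e1 : W * (S / W) ^ p = W * (Q / W) ^ p := by
      rw [hpow S, e2, heq]
    have hQeqS : Q = S := by
      have hppow : (S / W) ^ p = (Q / W) ^ p := mul_left_cancel₀ (ne_of_gt hW) e1
      have h2 : S / W = Q / W :=
        (pow_left_strictMonoOn₀ hp0).injOn (Set.mem_setOf_eq ▸ div_nonneg hSnn hW.le)
          (Set.mem_setOf_eq ▸ div_nonneg hQnn hW.le) hppow
      rw [div_eq_div_iff (ne_of_gt hW) (ne_of_gt hW)] at h2
      exact (mul_right_cancel₀ (ne_of_gt hW) h2).symm
    have hTid : T = (m / (d:ℝ)) • (1 : Matrix (Fin d) (Fin d) ℝ) := by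
      apply hCSeq.1
      rw [hQD, hQeqS, hSdef]; ring
    have htight : ∑ j, ω j • proj (V j) =
        (m / d) • (LinearMap.id : EuclideanSpace ℝ (Fin d) →ₗ[ℝ] EuclideanSpace ℝ (Fin d)) := by
      apply matOf.injective
      rw [map_sum, _root_.map_smul, matOf_id]
      calc ∑ j, matOf (ω j • proj (V j)) = ∑ j, ω j • A j := by
            refine Finset.sum_congr rfl fun j _ => ?_
            rw [_root_.map_smul]
        _ = T := hT.symm
        _ = (m / (d:ℝ)) • (1 : Matrix (Fin d) (Fin d) ℝ) := hTid
    refine ⟨⟨a (⟨0, by omega⟩, ⟨1, by omega⟩), fun i j hij => ?_⟩, htight⟩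
    have hmemt : (i, j) ∈ t := by rw [ht]; simp [Finset.mem_offDiag, hij]
    have heqJ : ∑ ij ∈ t, w ij • (fun x : ℝ => x ^ p) (a ij) ≤
        (fun x : ℝ => x ^ p) (∑ ij ∈ t, w ij • a ij) := by
      simp only [smul_eq_mul]
      rw [hwa, hwap, ← e2]
      exact le_of_eq (by field_simp)
    have hall := hconv.eq_of_le_map_sum hwpos hwsum hmem heqJ
    have : a (i, j) = a (⟨0, by omega⟩, ⟨1, by omega⟩) := hall hmemt hij0mem
    simpa [ha] using this
  · rintro ⟨⟨c, hc⟩, htight⟩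
    have hTid : T = (m / (d:ℝ)) • (1 : Matrix (Fin d) (Fin d) ℝ) := by
      rw [hT]
      calc ∑ j, ω j • A j = matOf (∑ j, ω j • proj (V j)) := by
            rw [map_sum]
            refine Finset.sum_congr rfl fun j _ => ?_
            rw [_root_.map_smul]
        _ = matOf ((m / d) • (LinearMap.id :
              EuclideanSpace ℝ (Fin d) →ₗ[ℝ] EuclideanSpace ℝ (Fin d))) := by rw [htight]
        _ = (m / (d:ℝ)) • (1 : Matrix (Fin d) (Fin d) ℝ) := by rw [_root_.map_smul, matOf_id]
    have hTTtr : (T*T).trace = m^2 / (d:ℝ) := hCSeq.2 hTid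
    have hQeqS : Q = S := by rw [hSdef]; linarith [hQD, hTTtr]
    have hceq : ∀ ij ∈ t, a ij = c := fun ij hij => by
      simp only [ha]
      exact hc _ _ (Finset.mem_offDiag.1 (ht ▸ hij)).2.2
    have hQc : Q = W * c := by
      rw [hQdef, hWdef, Finset.sum_mul]
      refine Finset.sum_congr rfl fun ij hij => ?_
      rw [hceq ij hij]
    have hcS : c = S / W := by
      rw [← hQeqS, hQc]; field_simp
    have hR : R = S ^ p / W ^ (p-1) := by
      rw [hRdef]
      calc ∑ ij ∈ t, ω ij.1 * ω ij.2 * a ij ^ p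
          = ∑ ij ∈ t, ω ij.1 * ω ij.2 * c ^ p := by
            refine Finset.sum_congr rfl fun ij hij => ?_
            rw [hceq ij hij]
        _ = W * c ^ p := by rw [hWdef, Finset.sum_mul]
        _ = W * (S / W) ^ p := by rw [hcS]
        _ = S ^ p / W ^ (p-1) := hpow S
    exact hR
end

section
/- Let p ≥ 2 be an integer and let {(V_j, ω_j)}_{j=1}^n be a tight p-fusion frame in ℝ^d with bound A, i.e. Σ_{j=1}^n ω_j ‖P_{V_j}(x)‖^{2p} = A ‖x‖^{2p} for all x ∈ ℝ^d. Then {(V_j, ω̃_j)}_{j=1}^n with ω̃_j := ω_j·(p−1+dim(V_j)/2) is a tight (p−1)-fusion frame; more precisely, Σ_{j=1}^n ω_j (p−1+dim(V_j)/2) ‖P_{V_j}(x)‖^{2(p−1)} = A(p−1+d/2) ‖x‖^{2(p−1)} for all x ∈ ℝ^d. -/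
open scoped BigOperators

open Polynomial
open Polynomial
lemma d2 (p : ℕ) (hp : 2 ≤ p) (a b c : ℝ) :
    (derivative (derivative ((C a + C b * X + C c * X ^ 2) ^ p))).eval 0
      = (p:ℝ) * ((p:ℝ) - 1) * a ^ (p - 2) * b ^ 2 + 2 * (p:ℝ) * c * a ^ (p - 1) := by
  have h1 : p - 1 - 1 = p - 2 := by omega
  have hc1 : ((p - 1 : ℕ) : ℝ) = (p : ℝ) - 1 := by
    rw [Nat.cast_sub (by omega)]; simp
  rw [Polynomial.derivative_pow]
  rw [derivative_mul, derivative_mul, Polynomial.derivative_pow]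
  simp [h1, hc1]
  ring

lemma key {ι : Type*} [Fintype ι] (p : ℕ) (hp : 2 ≤ p) (ω a b c : ι → ℝ)
    (A a₀ b₀ c₀ : ℝ)
    (h : ∀ t : ℝ, ∑ j, ω j * (a j + b j * t + c j * t ^ 2) ^ p
        = A * (a₀ + b₀ * t + c₀ * t ^ 2) ^ p) :
    ∑ j, ω j * ((p:ℝ) * ((p:ℝ) - 1) * (a j) ^ (p - 2) * (b j) ^ 2
        + 2 * (p:ℝ) * (c j) * (a j) ^ (p - 1))
      = A * ((p:ℝ) * ((p:ℝ) - 1) * a₀ ^ (p - 2) * b₀ ^ 2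
        + 2 * (p:ℝ) * c₀ * a₀ ^ (p - 1)) := by
  have hPQ : (∑ j, C (ω j) * (C (a j) + C (b j) * X + C (c j) * X ^ 2) ^ p)
      = C A * (C a₀ + C b₀ * X + C c₀ * X ^ 2) ^ p := by
    apply Polynomial.funext
    intro t
    simpa [eval_finset_sum] using h t
  have := congrArg (fun r : ℝ[X] => (derivative (derivative r)).eval 0) hPQ
  simp only [map_sum, derivative_C_mul, eval_finset_sum, eval_mul, eval_C] at this
  simpa [d2 p hp] using this
open scoped RealInnerProductSpace
open Module

variable {d : ℕ}

lemma proj_apply (V : Submodule ℝ (EuclideanSpace ℝ (Fin d))) (x : EuclideanSpace ℝ (Fin d)) :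
    proj V x = ↑(V.orthogonalProjection x) := rfl

lemma inner_proj_eq (V : Submodule ℝ (EuclideanSpace ℝ (Fin d))) (y : EuclideanSpace ℝ (Fin d))
    (w : EuclideanSpace ℝ (Fin d)) (hw : w ∈ V) : ⟪proj V y, w⟫ = ⟪y, w⟫ := by
  have h0 := Submodule.starProjection_inner_eq_zero (K := V) y w hw
  rw [inner_sub_left, sub_eq_zero] at h0
  exact h0.symm

lemma proj_inner (V : Submodule ℝ (EuclideanSpace ℝ (Fin d))) (u v : EuclideanSpace ℝ (Fin d)) :
    ⟪proj V u, proj V v⟫ = ⟪proj V u, v⟫ := by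
  calc ⟪proj V u, proj V v⟫ = ⟪proj V v, proj V u⟫ := (real_inner_comm _ _).symm
    _ = ⟪v, proj V u⟫ := inner_proj_eq V v _ (by rw [proj_apply]; exact Submodule.coe_mem _)
    _ = ⟪proj V u, v⟫ := real_inner_comm _ _

lemma parseval (x : EuclideanSpace ℝ (Fin d)) :
    ∑ i, ⟪x, (EuclideanSpace.basisFun (Fin d) ℝ) i⟫ ^ 2 = ‖x‖ ^ 2 := by
  have h := (EuclideanSpace.basisFun (Fin d) ℝ).sum_inner_mul_inner x x
  rw [real_inner_self_eq_norm_sq] at h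
  rw [← h]
  exact Finset.sum_congr rfl fun i _ => by rw [sq, real_inner_comm x]

lemma proj_norm_sq (V : Submodule ℝ (EuclideanSpace ℝ (Fin d))) (y : EuclideanSpace ℝ (Fin d)) :
    ‖proj V y‖ ^ 2 = ∑ k, ⟪y, ((stdOrthonormalBasis ℝ V) k : EuclideanSpace ℝ (Fin d))⟫ ^ 2 := by
  have h := (stdOrthonormalBasis ℝ V).sum_inner_mul_inner
    (V.orthogonalProjection y) (V.orthogonalProjection y)
  have hn : ‖proj V y‖ ^ 2 = ⟪(V.orthogonalProjection y : V), (V.orthogonalProjection y : V)⟫ := by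
    rw [real_inner_self_eq_norm_sq, proj_apply]
    simp
  rw [hn, ← h]
  apply Finset.sum_congr rfl
  intro k _
  have hk : ⟪(V.orthogonalProjection y : V), (stdOrthonormalBasis ℝ V) k⟫
      = ⟪y, ((stdOrthonormalBasis ℝ V) k : EuclideanSpace ℝ (Fin d))⟫ := by
    rw [Submodule.coe_inner, ← proj_apply, inner_proj_eq V y _ (Submodule.coe_mem _)]
  rw [real_inner_comm (V.orthogonalProjection y) ((stdOrthonormalBasis ℝ V) k), hk, sq]

lemma trace_lemma (V : Submodule ℝ (EuclideanSpace ℝ (Fin d))) :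
    ∑ i, ‖proj V ((EuclideanSpace.basisFun (Fin d) ℝ) i)‖ ^ 2 = (finrank ℝ V : ℝ) := by
  have key : ∀ k, ∑ i, ⟪(EuclideanSpace.basisFun (Fin d) ℝ) i,
      ((stdOrthonormalBasis ℝ V) k : EuclideanSpace ℝ (Fin d))⟫ ^ 2 = 1 := by
    intro k
    have hp := parseval ((stdOrthonormalBasis ℝ V) k : EuclideanSpace ℝ (Fin d))
    have h1 : ‖((stdOrthonormalBasis ℝ V) k : EuclideanSpace ℝ (Fin d))‖ = 1 := by
      rw [Submodule.norm_coe]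
      exact (stdOrthonormalBasis ℝ V).orthonormal.1 k
    rw [h1, one_pow] at hp
    rw [← hp]
    refine Finset.sum_congr rfl fun i _ => ?_
    rw [real_inner_comm]
  calc ∑ i, ‖proj V ((EuclideanSpace.basisFun (Fin d) ℝ) i)‖ ^ 2
      = ∑ i, ∑ k, ⟪(EuclideanSpace.basisFun (Fin d) ℝ) i,
        ((stdOrthonormalBasis ℝ V) k : EuclideanSpace ℝ (Fin d))⟫ ^ 2 :=
        Finset.sum_congr rfl fun i _ => proj_norm_sq V _
    _ = ∑ k, ∑ i, ⟪(EuclideanSpace.basisFun (Fin d) ℝ) i,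
        ((stdOrthonormalBasis ℝ V) k : EuclideanSpace ℝ (Fin d))⟫ ^ 2 := Finset.sum_comm
    _ = ∑ _k : Fin (finrank ℝ V), (1:ℝ) := Finset.sum_congr rfl fun k _ => key k
    _ = (finrank ℝ V : ℝ) := by simp

lemma expand (pn : ℕ) (u v : EuclideanSpace ℝ (Fin d)) (t : ℝ) :
    ‖u + t • v‖ ^ (2 * pn) = (‖u‖ ^ 2 + 2 * ⟪u, v⟫ * t + ‖v‖ ^ 2 * t ^ 2) ^ pn := by
  rw [pow_mul]
  congr 1
  rw [@norm_add_sq_real, real_inner_smul_right, norm_smul, mul_pow, Real.norm_eq_abs, sq_abs]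
  ring

theorem stmt9 {d n : ℕ} (p : ℕ) (hp : 2 ≤ p)
    (V : Fin n → Submodule ℝ (EuclideanSpace ℝ (Fin d)))
    (hVbot : ∀ j, V j ≠ ⊥) (hVtop : ∀ j, V j ≠ ⊤)
    (ω : Fin n → ℝ) (hω : ∀ j, 0 < ω j)
    (A : ℝ) (hA : 0 < A)
    (h : ∀ x : EuclideanSpace ℝ (Fin d),
      ∑ j, ω j * ‖proj (V j) x‖ ^ (2 * p) = A * ‖x‖ ^ (2 * p)) :
    ∀ x : EuclideanSpace ℝ (Fin d),
      ∑ j, ω j * ((p : ℝ) - 1 + (Module.finrank ℝ (V j) : ℝ) / 2) *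
          ‖proj (V j) x‖ ^ (2 * (p - 1))
        = A * ((p : ℝ) - 1 + (d : ℝ) / 2) * ‖x‖ ^ (2 * (p - 1)) := by
  intro x
  set e := EuclideanSpace.basisFun (Fin d) ℝ with he
  -- second-derivative identity for each coordinate direction
  have key_i : ∀ i : Fin d,
      ∑ j, ω j * ((p:ℝ) * ((p:ℝ) - 1) * (‖proj (V j) x‖ ^ 2) ^ (p - 2)
            * (2 * ⟪proj (V j) x, proj (V j) (e i)⟫) ^ 2
          + 2 * (p:ℝ) * (‖proj (V j) (e i)‖ ^ 2) * (‖proj (V j) x‖ ^ 2) ^ (p - 1))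
        = A * ((p:ℝ) * ((p:ℝ) - 1) * (‖x‖ ^ 2) ^ (p - 2) * (2 * ⟪x, e i⟫) ^ 2
          + 2 * (p:ℝ) * (‖e i‖ ^ 2) * (‖x‖ ^ 2) ^ (p - 1)) := by
    intro i
    refine key p hp ω (fun j => ‖proj (V j) x‖ ^ 2)
      (fun j => 2 * ⟪proj (V j) x, proj (V j) (e i)⟫)
      (fun j => ‖proj (V j) (e i)‖ ^ 2) A (‖x‖ ^ 2) (2 * ⟪x, e i⟫) (‖e i‖ ^ 2) ?_
    intro t
    have hx := h (x + t • (e i))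
    simp only [map_add, map_smul] at hx
    simp only [expand p] at hx
    convert hx using 3 <;> ring
  have hsum := Finset.sum_congr (rfl : (Finset.univ : Finset (Fin d)) = Finset.univ)
    (fun i _ => key_i i)
  -- simplify left side
  have hL : ∑ i : Fin d, ∑ j, ω j * ((p:ℝ) * ((p:ℝ) - 1) * (‖proj (V j) x‖ ^ 2) ^ (p - 2)
            * (2 * ⟪proj (V j) x, proj (V j) (e i)⟫) ^ 2
          + 2 * (p:ℝ) * (‖proj (V j) (e i)‖ ^ 2) * (‖proj (V j) x‖ ^ 2) ^ (p - 1))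
      = ∑ j, ω j * ((p:ℝ) * ((p:ℝ) - 1) * (‖proj (V j) x‖ ^ 2) ^ (p - 2)
            * (4 * ‖proj (V j) x‖ ^ 2)
          + 2 * (p:ℝ) * (Module.finrank ℝ (V j) : ℝ) * (‖proj (V j) x‖ ^ 2) ^ (p - 1)) := by
    rw [Finset.sum_comm]
    refine Finset.sum_congr rfl fun j _ => ?_
    have hb : ∑ i : Fin d, (2 * ⟪proj (V j) x, proj (V j) (e i)⟫) ^ 2
        = 4 * ‖proj (V j) x‖ ^ 2 := by
      have h1 : ∀ i : Fin d, (2 * ⟪proj (V j) x, proj (V j) (e i)⟫) ^ 2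
          = 4 * ⟪proj (V j) x, e i⟫ ^ 2 := fun i => by rw [proj_inner]; ring
      rw [Finset.sum_congr rfl fun i _ => h1 i, ← Finset.mul_sum, parseval]
    have hc : ∑ i : Fin d, ‖proj (V j) (e i)‖ ^ 2 = (Module.finrank ℝ (V j) : ℝ) :=
      trace_lemma (V j)
    calc ∑ i : Fin d, ω j * ((p:ℝ) * ((p:ℝ) - 1) * (‖proj (V j) x‖ ^ 2) ^ (p - 2)
            * (2 * ⟪proj (V j) x, proj (V j) (e i)⟫) ^ 2
          + 2 * (p:ℝ) * (‖proj (V j) (e i)‖ ^ 2) * (‖proj (V j) x‖ ^ 2) ^ (p - 1))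
        = ∑ i : Fin d, (ω j * ((p:ℝ) * ((p:ℝ) - 1) * (‖proj (V j) x‖ ^ 2) ^ (p - 2))
            * (2 * ⟪proj (V j) x, proj (V j) (e i)⟫) ^ 2
          + ω j * (2 * (p:ℝ) * (‖proj (V j) x‖ ^ 2) ^ (p - 1)) * (‖proj (V j) (e i)‖ ^ 2)) :=
          Finset.sum_congr rfl fun i _ => by ring
      _ = ω j * ((p:ℝ) * ((p:ℝ) - 1) * (‖proj (V j) x‖ ^ 2) ^ (p - 2))
            * (∑ i : Fin d, (2 * ⟪proj (V j) x, proj (V j) (e i)⟫) ^ 2)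
          + ω j * (2 * (p:ℝ) * (‖proj (V j) x‖ ^ 2) ^ (p - 1))
            * (∑ i : Fin d, ‖proj (V j) (e i)‖ ^ 2) := by
          rw [Finset.sum_add_distrib, Finset.mul_sum, Finset.mul_sum]
      _ = _ := by rw [hb, hc]; ring
  -- simplify right side
  have hR : ∑ i : Fin d, A * ((p:ℝ) * ((p:ℝ) - 1) * (‖x‖ ^ 2) ^ (p - 2) * (2 * ⟪x, e i⟫) ^ 2
          + 2 * (p:ℝ) * (‖e i‖ ^ 2) * (‖x‖ ^ 2) ^ (p - 1))
      = A * ((p:ℝ) * ((p:ℝ) - 1) * (‖x‖ ^ 2) ^ (p - 2) * (4 * ‖x‖ ^ 2)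
          + 2 * (p:ℝ) * (d : ℝ) * (‖x‖ ^ 2) ^ (p - 1)) := by
    have hb : ∑ i : Fin d, (2 * ⟪x, e i⟫) ^ 2 = 4 * ‖x‖ ^ 2 := by
      have h1 : ∀ i : Fin d, (2 * ⟪x, e i⟫) ^ 2 = 4 * ⟪x, e i⟫ ^ 2 := fun i => by ring
      rw [Finset.sum_congr rfl fun i _ => h1 i, ← Finset.mul_sum, parseval]
    have hc : ∑ i : Fin d, ‖e i‖ ^ 2 = (d : ℝ) := by
      have h1 : ∀ i : Fin d, ‖e i‖ ^ 2 = 1 := fun i => by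
        rw [e.orthonormal.1 i]; norm_num
      rw [Finset.sum_congr rfl fun i _ => h1 i]
      simp
    calc ∑ i : Fin d, A * ((p:ℝ) * ((p:ℝ) - 1) * (‖x‖ ^ 2) ^ (p - 2) * (2 * ⟪x, e i⟫) ^ 2
          + 2 * (p:ℝ) * (‖e i‖ ^ 2) * (‖x‖ ^ 2) ^ (p - 1))
        = ∑ i : Fin d, (A * ((p:ℝ) * ((p:ℝ) - 1) * (‖x‖ ^ 2) ^ (p - 2)) * (2 * ⟪x, e i⟫) ^ 2
          + A * (2 * (p:ℝ) * (‖x‖ ^ 2) ^ (p - 1)) * (‖e i‖ ^ 2)) :=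
          Finset.sum_congr rfl fun i _ => by ring
      _ = A * ((p:ℝ) * ((p:ℝ) - 1) * (‖x‖ ^ 2) ^ (p - 2)) * (∑ i : Fin d, (2 * ⟪x, e i⟫) ^ 2)
          + A * (2 * (p:ℝ) * (‖x‖ ^ 2) ^ (p - 1)) * (∑ i : Fin d, ‖e i‖ ^ 2) := by
          rw [Finset.sum_add_distrib, Finset.mul_sum, Finset.mul_sum]
      _ = _ := by rw [hb, hc]; ring
  rw [hL, hR] at hsum
  -- final algebra
  have hpow : ∀ y : ℝ, y ^ (p - 2) * y = y ^ (p - 1) := fun y => by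
    rw [← pow_succ]
    congr 1
    omega
  have reform : ∀ w dim av : ℝ,
      w * ((p:ℝ) * ((p:ℝ) - 1) * av ^ (p - 2) * (4 * av)
        + 2 * (p:ℝ) * dim * av ^ (p - 1))
      = (4 * (p:ℝ)) * (w * ((p:ℝ) - 1 + dim / 2) * av ^ (p - 1)) := by
    intro w dim av
    have h1 : (p:ℝ) * ((p:ℝ) - 1) * av ^ (p - 2) * (4 * av)
        = 4 * ((p:ℝ) * ((p:ℝ) - 1)) * (av ^ (p - 2) * av) := by ring
    rw [h1, hpow av]
    ring
  have h4p : (4 * (p:ℝ)) ≠ 0 := by positivity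
  apply mul_left_cancel₀ h4p
  have hgoal : ∀ z : EuclideanSpace ℝ (Fin d), ‖z‖ ^ (2 * (p - 1)) = (‖z‖ ^ 2) ^ (p - 1) :=
    fun z => by rw [pow_mul]
  simp only [hgoal]
  rw [Finset.mul_sum]
  calc ∑ j, 4 * (p:ℝ) * (ω j * ((p:ℝ) - 1 + (Module.finrank ℝ (V j) : ℝ) / 2)
          * (‖proj (V j) x‖ ^ 2) ^ (p - 1))
      = ∑ j, ω j * ((p:ℝ) * ((p:ℝ) - 1) * (‖proj (V j) x‖ ^ 2) ^ (p - 2)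
            * (4 * ‖proj (V j) x‖ ^ 2)
          + 2 * (p:ℝ) * (Module.finrank ℝ (V j) : ℝ) * (‖proj (V j) x‖ ^ 2) ^ (p - 1)) := by
        refine Finset.sum_congr rfl fun j _ => ?_
        rw [reform (ω j) (Module.finrank ℝ (V j) : ℝ) (‖proj (V j) x‖ ^ 2)]
    _ = A * ((p:ℝ) * ((p:ℝ) - 1) * (‖x‖ ^ 2) ^ (p - 2) * (4 * ‖x‖ ^ 2)
          + 2 * (p:ℝ) * (d : ℝ) * (‖x‖ ^ 2) ^ (p - 1)) := hsum
    _ = 4 * (p:ℝ) * (A * ((p:ℝ) - 1 + (d : ℝ) / 2) * (‖x‖ ^ 2) ^ (p - 1)) := by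
        rw [reform A (d : ℝ) (‖x‖ ^ 2)]
end

section
/- Let p ≥ 1 be an integer and let {(V_j, ω_j)}_{j=1}^n be a tight p-fusion frame in ℝ^d. Then {(V_j, ω'_j)}_{j=1}^n with ω'_j := ω_j·Π_{l=1}^{p−1}(l + dim(V_j)/2) is a tight fusion frame, i.e. there is a constant A' > 0 with Σ_{j=1}^n ω'_j ‖P_{V_j}(x)‖^{2} = A' ‖x‖^{2} for all x ∈ ℝ^d. -/
open scoped BigOperators

namespace Stmt10Aux

open MvPolynomial

variable {d : ℕ}

lemma C_two : (2 : MvPolynomial (Fin d) ℝ) = C 2 :=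
  (map_ofNat (C : ℝ →+* MvPolynomial (Fin d) ℝ) 2).symm

lemma C_four : (4 : MvPolynomial (Fin d) ℝ) = C 4 :=
  (map_ofNat (C : ℝ →+* MvPolynomial (Fin d) ℝ) 4).symm

lemma natCast_eq_C (k : ℕ) : ((k : ℕ) : MvPolynomial (Fin d) ℝ) = C ((k : ℝ)) := by
  rw [← C_eq_coe_nat]

/-- matrix entries of an endomorphism of Euclidean space -/
noncomputable def mat (P : EuclideanSpace ℝ (Fin d) →ₗ[ℝ] EuclideanSpace ℝ (Fin d)) :
    Fin d → Fin d → ℝ := fun k i => P (EuclideanSpace.single k (1:ℝ)) i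

lemma euclid_decomp (x : EuclideanSpace ℝ (Fin d)) :
    ∑ k, x k • (EuclideanSpace.single k (1:ℝ)) = x := by
  classical
  simpa [EuclideanSpace.basisFun_apply, EuclideanSpace.basisFun_repr] using
    (EuclideanSpace.basisFun (Fin d) ℝ).sum_repr x

lemma apply_coord (P : EuclideanSpace ℝ (Fin d) →ₗ[ℝ] EuclideanSpace ℝ (Fin d))
    (x : EuclideanSpace ℝ (Fin d)) (i : Fin d) :
    P x i = ∑ k, x k * mat P k i := by
  have h0 : P x i = EuclideanSpace.projₗ i (P x) := rfl
  rw [h0]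
  conv_lhs => rw [← euclid_decomp x, map_sum, map_sum]
  refine Finset.sum_congr rfl fun k _ => ?_
  rw [map_smul]
  rfl

/-- the quadratic form polynomial -/
noncomputable def qpoly (M : Fin d → Fin d → ℝ) : MvPolynomial (Fin d) ℝ :=
  ∑ k, ∑ l, C (M k l) * (X k * X l)

/-- half the gradient components -/
noncomputable def spoly (M : Fin d → Fin d → ℝ) (i : Fin d) : MvPolynomial (Fin d) ℝ :=
  ∑ k, C (M i k) * X k

lemma pderiv_qpoly (M : Fin d → Fin d → ℝ) (hsym : ∀ k i, M k i = M i k) (i : Fin d) :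
    pderiv i (qpoly M) = 2 * spoly M i := by
  classical
  unfold qpoly spoly
  rw [map_sum]
  have key : ∀ k l : Fin d, pderiv i (C (M k l) * (X k * X l))
      = (if k = i then C (M k l) * X l else 0) + (if l = i then C (M k l) * X k else 0) := by
    intro k l
    rw [pderiv_C_mul, pderiv_mul]
    by_cases hk : k = i <;> by_cases hl : l = i <;>
      simp [hk, hl, pderiv_X_self, pderiv_X_of_ne, mul_add]
  simp only [map_sum, key, Finset.sum_add_distrib]
  have A1 : ∑ k : Fin d, ∑ l : Fin d, (if k = i then C (M k l) * X l else 0)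
      = ∑ l : Fin d, C (M i l) * X l := by
    rw [Finset.sum_comm]
    simp [Finset.sum_ite_eq', Finset.mem_univ]
  have A2 : ∑ k : Fin d, ∑ l : Fin d, (if l = i then C (M k l) * X k else 0)
      = ∑ k : Fin d, C (M k i) * X k := by
    simp [Finset.sum_ite_eq', Finset.mem_univ]
  rw [A1, A2, two_mul]
  congr 1
  exact Finset.sum_congr rfl fun k _ => by rw [hsym k i]

lemma pderiv_spoly (M : Fin d → Fin d → ℝ) (i i' : Fin d) :
    pderiv i (spoly M i') = C (M i' i) := by
  classical
  unfold spoly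
  rw [map_sum]
  have : ∀ k : Fin d, pderiv i (C (M i' k) * X k) = if k = i then C (M i' k) else 0 := by
    intro k
    by_cases hk : k = i <;> simp [hk, pderiv_C_mul, pderiv_X_self, pderiv_X_of_ne]
  simp [this]

lemma sum_spoly_sq (M : Fin d → Fin d → ℝ) (hsym : ∀ k i, M k i = M i k)
    (hidem : ∀ k i, ∑ l, M k l * M l i = M k i) :
    ∑ i, spoly M i * spoly M i = qpoly M := by
  classical
  unfold spoly qpoly
  have : ∀ i : Fin d, (∑ k, C (M i k) * X k) * (∑ l, C (M i l) * X l)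
      = ∑ k, ∑ l, C (M i k * M i l) * (X k * X l) := by
    intro i
    rw [Finset.sum_mul_sum]
    exact Finset.sum_congr rfl fun k _ => Finset.sum_congr rfl fun l _ => by
      rw [map_mul]; ring
  simp only [this]
  rw [Finset.sum_comm]
  refine Finset.sum_congr rfl fun k _ => ?_
  rw [Finset.sum_comm]
  refine Finset.sum_congr rfl fun l _ => ?_
  rw [← Finset.sum_mul, ← map_sum]
  congr 2
  rw [← hidem k l]
  exact Finset.sum_congr rfl fun i _ => by rw [hsym i l, hsym k i]

/-- the Laplacian as a linear map -/
noncomputable def lap : MvPolynomial (Fin d) ℝ →ₗ[ℝ] MvPolynomial (Fin d) ℝ :=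
  ∑ i : Fin d, ((pderiv i).toLinearMap.comp (pderiv i).toLinearMap)

lemma lap_apply (f : MvPolynomial (Fin d) ℝ) :
    lap f = ∑ i, pderiv i (pderiv i f) := by
  simp [lap, LinearMap.sum_apply]

lemma pderiv_two_mul_spoly (M : Fin d → Fin d → ℝ) (i i' : Fin d) :
    pderiv i (2 * spoly M i') = 2 * C (M i' i) := by
  rw [C_two, pderiv_C_mul, pderiv_spoly]

lemma lap_qpoly (M : Fin d → Fin d → ℝ) (hsym : ∀ k i, M k i = M i k) (t : ℝ)
    (htr : ∑ i, M i i = t) :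
    lap (qpoly M) = C (2 * t) := by
  rw [lap_apply]
  have : ∀ i : Fin d, pderiv i (pderiv i (qpoly M)) = 2 * C (M i i) := by
    intro i
    rw [pderiv_qpoly M hsym i, pderiv_two_mul_spoly]
  simp only [this]
  rw [← Finset.mul_sum, ← map_sum, htr, C_two, ← map_mul]

lemma Cmul_pow_pred (q : MvPolynomial (Fin d) ℝ) (k : ℕ) :
    C ((k:ℝ)) * (q ^ (k-1) * q) = C ((k:ℝ)) * q ^ k := by
  cases k with
  | zero => simp
  | succ m => rw [← pow_succ]; rfl

lemma lap_pow (M : Fin d → Fin d → ℝ) (hsym : ∀ k i, M k i = M i k)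
    (hidem : ∀ k i, ∑ l, M k l * M l i = M k i) (t : ℝ) (htr : ∑ i, M i i = t) (k : ℕ) :
    lap (qpoly M ^ (k+1)) = C (((k:ℝ)+1) * (4*(k:ℝ) + 2*t)) * qpoly M ^ k := by
  classical
  rw [lap_apply]
  have hC1 : ((k+1 : ℕ) : MvPolynomial (Fin d) ℝ) = C ((k:ℝ)+1) := by
    rw [natCast_eq_C]; push_cast; ring_nf
  have h1 : ∀ i : Fin d, pderiv i (qpoly M ^ (k+1))
      = C ((k:ℝ)+1) * (qpoly M ^ k * (2 * spoly M i)) := by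
    intro i
    rw [pderiv_pow, pderiv_qpoly M hsym i, Nat.add_sub_cancel, hC1]
    ring
  have h2 : ∀ i : Fin d, pderiv i (pderiv i (qpoly M ^ (k+1)))
      = C ((k:ℝ)+1) * ((C (k:ℝ) * qpoly M ^ (k-1) * (2 * spoly M i)) * (2 * spoly M i)
          + qpoly M ^ k * (2 * C (M i i))) := by
    intro i
    rw [h1 i, pderiv_C_mul, pderiv_mul, pderiv_pow, pderiv_qpoly M hsym i,
      pderiv_two_mul_spoly, natCast_eq_C]
  simp only [h2]
  rw [← Finset.mul_sum]
  have h3 : ∑ i, ((C (k:ℝ) * qpoly M ^ (k-1) * (2 * spoly M i)) * (2 * spoly M i)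
      + qpoly M ^ k * (2 * C (M i i)))
      = C (k:ℝ) * qpoly M ^ (k-1) * (4 * qpoly M) + qpoly M ^ k * (2 * C t) := by
    rw [Finset.sum_add_distrib]
    congr 1
    · have : ∀ i : Fin d, (C (k:ℝ) * qpoly M ^ (k-1) * (2 * spoly M i)) * (2 * spoly M i)
          = C (k:ℝ) * qpoly M ^ (k-1) * 4 * (spoly M i * spoly M i) := fun i => by ring
      simp only [this]
      rw [← Finset.mul_sum, sum_spoly_sq M hsym hidem]
      ring
    · calc ∑ i, qpoly M ^ k * (2 * C (M i i))
          = qpoly M ^ k * (2 * C (∑ i, M i i)) := by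
            conv_rhs => rw [map_sum, Finset.mul_sum, Finset.mul_sum]
        _ = qpoly M ^ k * (2 * C t) := by rw [htr]
  rw [h3]
  have h4 : C (k:ℝ) * qpoly M ^ (k-1) * (4 * qpoly M) = C (k:ℝ) * qpoly M ^ k * 4 := by
    calc C (k:ℝ) * qpoly M ^ (k-1) * (4 * qpoly M)
        = C ((k:ℝ)) * (qpoly M ^ (k-1) * qpoly M) * 4 := by ring
      _ = C ((k:ℝ)) * qpoly M ^ k * 4 := by rw [Cmul_pow_pred]
  have hc : C ((k:ℝ)+1) * (C (k:ℝ) * C 4 + C 2 * C t)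
      = (C (((k:ℝ)+1) * (4*(k:ℝ) + 2*t)) : MvPolynomial (Fin d) ℝ) := by
    rw [← map_mul, ← map_mul, ← map_add, ← map_mul]
    congr 1
    ring
  rw [h4, C_two, C_four, ← hc]
  ring

lemma lap_pow_smul (m : ℕ) (c : ℝ) (f : MvPolynomial (Fin d) ℝ) :
    (lap ^ m) (C c * f) = C c * (lap ^ m) f := by
  rw [← smul_eq_C_mul, ← smul_eq_C_mul, map_smul]

lemma lap_iter (M : Fin d → Fin d → ℝ) (hsym : ∀ k i, M k i = M i k)
    (hidem : ∀ k i, ∑ l, M k l * M l i = M k i) (t : ℝ) (htr : ∑ i, M i i = t) (m : ℕ) :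
    (lap ^ m) (qpoly M ^ (m+1))
      = C (∏ l ∈ Finset.Icc 1 m, (4*((l:ℝ)+1)*((l:ℝ) + t/2))) * qpoly M := by
  induction m with
  | zero => simp
  | succ m ih =>
    rw [pow_succ, Module.End.mul_apply, lap_pow M hsym hidem t htr (m+1)]
    rw [lap_pow_smul, ih, ← mul_assoc, ← map_mul]
    rw [Finset.prod_Icc_succ_top (by omega : 1 ≤ m + 1)]
    congr 1
    generalize (∏ l ∈ Finset.Icc 1 m, (4*((l:ℝ)+1)*((l:ℝ) + t/2))) = Pm
    push_cast
    ring

lemma eval_qpoly (M : Fin d → Fin d → ℝ) (x : Fin d → ℝ) :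
    eval x (qpoly M) = ∑ k, ∑ l, M k l * (x k * x l) := by
  simp [qpoly]

section ProjFacts

lemma proj_apply (V : Submodule ℝ (EuclideanSpace ℝ (Fin d))) (x : EuclideanSpace ℝ (Fin d)) :
    proj V x = (V.orthogonalProjection x : EuclideanSpace ℝ (Fin d)) := rfl

lemma proj_sa (V : Submodule ℝ (EuclideanSpace ℝ (Fin d))) (x y : EuclideanSpace ℝ (Fin d)) :
    inner ℝ (proj V x) y = (inner ℝ x (proj V y) : ℝ) := by
  rw [proj_apply, proj_apply]
  exact V.inner_starProjection_left_eq_right x y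

lemma proj_idem (V : Submodule ℝ (EuclideanSpace ℝ (Fin d))) (x : EuclideanSpace ℝ (Fin d)) :
    proj V (proj V x) = proj V x := by
  rw [proj_apply, proj_apply]
  exact congrArg _ (Submodule.orthogonalProjection_mem_subspace_eq_self _)

lemma coord_eq_inner (y : EuclideanSpace ℝ (Fin d)) (i : Fin d) :
    y i = inner ℝ y (EuclideanSpace.single i (1:ℝ)) := by
  rw [EuclideanSpace.inner_single_right]
  simp

lemma mat_sym (P : EuclideanSpace ℝ (Fin d) →ₗ[ℝ] EuclideanSpace ℝ (Fin d))
    (hsa : ∀ x y, inner ℝ (P x) y = (inner ℝ x (P y) : ℝ)) (k i : Fin d) :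
    mat P k i = mat P i k := by
  unfold mat
  calc (P (EuclideanSpace.single k 1)) i
      = inner ℝ (P (EuclideanSpace.single k 1)) (EuclideanSpace.single i 1) := coord_eq_inner _ _
    _ = inner ℝ (EuclideanSpace.single k 1) (P (EuclideanSpace.single i 1)) := hsa _ _
    _ = inner ℝ (P (EuclideanSpace.single i 1)) (EuclideanSpace.single k 1) := real_inner_comm _ _
    _ = (P (EuclideanSpace.single i 1)) k := (coord_eq_inner _ _).symm

lemma mat_idem (P : EuclideanSpace ℝ (Fin d) →ₗ[ℝ] EuclideanSpace ℝ (Fin d))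
    (hid : ∀ x, P (P x) = P x) (k i : Fin d) :
    ∑ l, mat P k l * mat P l i = mat P k i := by
  have h1 : P (P (EuclideanSpace.single k (1:ℝ))) i = ∑ l, mat P k l * mat P l i := by
    rw [apply_coord P (P (EuclideanSpace.single k (1:ℝ))) i]
    rfl
  rw [← h1, hid]
  rfl

lemma trace_diag (P : EuclideanSpace ℝ (Fin d) →ₗ[ℝ] EuclideanSpace ℝ (Fin d)) :
    LinearMap.trace ℝ _ P = ∑ i, mat P i i := by
  classical
  rw [LinearMap.trace_eq_matrix_trace ℝ ((EuclideanSpace.basisFun (Fin d) ℝ).toBasis) P,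
    Matrix.trace]
  refine Finset.sum_congr rfl fun i _ => ?_
  rw [Matrix.diag_apply, LinearMap.toMatrix_apply]
  simp [mat, OrthonormalBasis.coe_toBasis, OrthonormalBasis.coe_toBasis_repr_apply,
    EuclideanSpace.basisFun_apply, EuclideanSpace.basisFun_repr]

lemma mat_trace_proj (V : Submodule ℝ (EuclideanSpace ℝ (Fin d))) :
    ∑ i, mat (proj V) i i = (Module.finrank ℝ V : ℝ) := by
  have hproj : LinearMap.IsProj V (proj V) := by
    refine ⟨fun x => (V.orthogonalProjection x).2, fun x hx => ?_⟩
    rw [proj_apply]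
    exact Submodule.starProjection_eq_self_iff.mpr hx
  rw [← trace_diag]
  exact_mod_cast hproj.trace

lemma mat_trace_id :
    ∑ i, mat (LinearMap.id : EuclideanSpace ℝ (Fin d) →ₗ[ℝ] EuclideanSpace ℝ (Fin d)) i i
      = (d : ℝ) := by
  rw [← trace_diag, LinearMap.trace_id]
  simp [finrank_euclideanSpace_fin]

lemma eval_qpoly_norm (P : EuclideanSpace ℝ (Fin d) →ₗ[ℝ] EuclideanSpace ℝ (Fin d))
    (hsa : ∀ x y, inner ℝ (P x) y = (inner ℝ x (P y) : ℝ)) (hid : ∀ x, P (P x) = P x)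
    (x : Fin d → ℝ) :
    eval x (qpoly (mat P)) = ‖P ((WithLp.equiv 2 (Fin d → ℝ)).symm x)‖ ^ 2 := by
  set y : EuclideanSpace ℝ (Fin d) := (WithLp.equiv 2 (Fin d → ℝ)).symm x with hy
  have hyx : ∀ k, y k = x k := fun _ => rfl
  rw [eval_qpoly]
  have h1 : ‖P y‖ ^ 2 = (inner ℝ y (P y) : ℝ) := by
    rw [← real_inner_self_eq_norm_sq, hsa, hid]
  rw [h1]
  have h2 : (inner ℝ y (P y) : ℝ) = ∑ i, x i * P y i := by
    rw [PiLp.inner_apply]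
    exact Finset.sum_congr rfl fun i _ => by rw [RCLike.inner_apply', conj_trivial]; rfl
  rw [h2]
  have h3 : ∀ i, x i * P y i = ∑ k, mat P k i * (x k * x i) := by
    intro i
    rw [apply_coord P y i, Finset.mul_sum]
    refine Finset.sum_congr rfl fun k _ => ?_
    rw [hyx k]
    ring
  simp only [h3]
  rw [Finset.sum_comm]

end ProjFacts

end Stmt10Aux

open Stmt10Aux MvPolynomial in
theorem stmt10 {d n : ℕ} (p : ℕ) (hp : 1 ≤ p)
    (V : Fin n → Submodule ℝ (EuclideanSpace ℝ (Fin d)))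
    (hVbot : ∀ j, V j ≠ ⊥) (hVtop : ∀ j, V j ≠ ⊤)
    (ω : Fin n → ℝ) (hω : ∀ j, 0 < ω j)
    (A : ℝ) (hA : 0 < A)
    (h : ∀ x : EuclideanSpace ℝ (Fin d),
      ∑ j, ω j * ‖proj (V j) x‖ ^ (2 * p) = A * ‖x‖ ^ (2 * p))
    (ω' : Fin n → ℝ)
    (hω' : ∀ j, ω' j =
      ω j * ∏ l ∈ Finset.Icc 1 (p - 1), ((l : ℝ) + (Module.finrank ℝ (V j) : ℝ) / 2)) :
    ∃ A' : ℝ, 0 < A' ∧ ∀ x : EuclideanSpace ℝ (Fin d),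
      ∑ j, ω' j * ‖proj (V j) x‖ ^ 2 = A' * ‖x‖ ^ 2 := by
  classical
  obtain ⟨m, rfl⟩ : ∃ m, p = m + 1 := ⟨p - 1, by omega⟩
  simp only [Nat.add_sub_cancel] at hω'
  set Pid : EuclideanSpace ℝ (Fin d) →ₗ[ℝ] EuclideanSpace ℝ (Fin d) := LinearMap.id with hPid
  have hsa_id : ∀ x y : EuclideanSpace ℝ (Fin d), inner ℝ (Pid x) y = (inner ℝ x (Pid y) : ℝ) :=
    fun _ _ => rfl
  have hid_id : ∀ x, Pid (Pid x) = Pid x := fun _ => rfl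
  have hsaj : ∀ j, ∀ x y : EuclideanSpace ℝ (Fin d),
      inner ℝ (proj (V j) x) y = (inner ℝ x (proj (V j) y) : ℝ) := fun j => proj_sa (V j)
  have hidj : ∀ j, ∀ x, proj (V j) (proj (V j) x) = proj (V j) x := fun j => proj_idem (V j)
  have hsymj : ∀ j, ∀ k i, mat (proj (V j)) k i = mat (proj (V j)) i k :=
    fun j => mat_sym _ (hsaj j)
  have hidemj : ∀ j, ∀ k i, ∑ l, mat (proj (V j)) k l * mat (proj (V j)) l i
      = mat (proj (V j)) k i := fun j => mat_idem _ (hidj j)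
  have htrj : ∀ j, ∑ i, mat (proj (V j)) i i = (Module.finrank ℝ (V j) : ℝ) :=
    fun j => mat_trace_proj (V j)
  have htr_id : ∑ i, mat Pid i i = (d : ℝ) := by rw [hPid]; exact mat_trace_id
  -- step 1: the hypothesis as a polynomial identity
  have hpoly : (∑ j, C (ω j) * qpoly (mat (proj (V j))) ^ (m+1))
      = C A * qpoly (mat Pid) ^ (m+1) := by
    apply MvPolynomial.funext
    intro x
    have e1 : ∀ j, eval x (qpoly (mat (proj (V j))))
        = ‖proj (V j) ((WithLp.equiv 2 (Fin d → ℝ)).symm x)‖ ^ 2 :=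
      fun j => eval_qpoly_norm _ (hsaj j) (hidj j) x
    have e2 : eval x (qpoly (mat Pid)) = ‖(WithLp.equiv 2 (Fin d → ℝ)).symm x‖ ^ 2 :=
      eval_qpoly_norm Pid hsa_id hid_id x
    simp only [map_sum, map_mul, map_pow, eval_C, e1, e2, ← pow_mul]
    exact h ((WithLp.equiv 2 (Fin d → ℝ)).symm x)
  -- step 2: apply the Laplacian m times
  have hlap := congrArg (⇑(lap ^ m)) hpoly
  rw [map_sum] at hlap
  simp only [lap_pow_smul] at hlap
  have hLj : ∀ j, (lap ^ m) (qpoly (mat (proj (V j))) ^ (m+1))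
      = C (∏ l ∈ Finset.Icc 1 m,
            (4*((l:ℝ)+1)*((l:ℝ) + (Module.finrank ℝ (V j) : ℝ)/2)))
        * qpoly (mat (proj (V j))) :=
    fun j => lap_iter _ (hsymj j) (hidemj j) _ (htrj j) m
  have hLd : (lap ^ m) (qpoly (mat Pid) ^ (m+1))
      = C (∏ l ∈ Finset.Icc 1 m, (4*((l:ℝ)+1)*((l:ℝ) + (d:ℝ)/2))) * qpoly (mat Pid) :=
    lap_iter _ (mat_sym _ hsa_id) (mat_idem _ hid_id) _ htr_id m
  rw [hLd] at hlap
  simp only [hLj] at hlap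
  -- step 3: constants
  set K0 : ℝ := ∏ l ∈ Finset.Icc 1 m, (4*((l:ℝ)+1)) with hK0def
  have hK0 : 0 < K0 := Finset.prod_pos fun l _ => by positivity
  have hsplit : ∀ t : ℝ, ∏ l ∈ Finset.Icc 1 m, (4*((l:ℝ)+1)*((l:ℝ) + t/2))
      = K0 * ∏ l ∈ Finset.Icc 1 m, ((l:ℝ) + t/2) := fun t => by
    rw [hK0def, ← Finset.prod_mul_distrib]
  refine ⟨A * ∏ l ∈ Finset.Icc 1 m, ((l:ℝ) + (d:ℝ)/2), ?_, ?_⟩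
  · have hpos : 0 < ∏ l ∈ Finset.Icc 1 m, ((l:ℝ) + (d:ℝ)/2) :=
      Finset.prod_pos fun l hl => by
        have h1 : 1 ≤ l := (Finset.mem_Icc.mp hl).1
        have h2 : (1:ℝ) ≤ (l:ℝ) := by exact_mod_cast h1
        positivity
    positivity
  · intro x
    have hev := congrArg (eval (WithLp.equiv 2 (Fin d → ℝ) x)) hlap
    have e1 : ∀ j, eval (WithLp.equiv 2 (Fin d → ℝ) x) (qpoly (mat (proj (V j))))
        = ‖proj (V j) x‖ ^ 2 :=
      fun j => eval_qpoly_norm _ (hsaj j) (hidj j) (WithLp.equiv 2 (Fin d → ℝ) x)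
    have e2 : eval (WithLp.equiv 2 (Fin d → ℝ) x) (qpoly (mat Pid)) = ‖x‖ ^ 2 :=
      eval_qpoly_norm Pid hsa_id hid_id (WithLp.equiv 2 (Fin d → ℝ) x)
    simp only [map_sum, map_mul, eval_C, e1, e2] at hev
    apply mul_left_cancel₀ (ne_of_gt hK0)
    calc K0 * ∑ j, ω' j * ‖proj (V j) x‖ ^ 2
        = ∑ j, ω j * ((∏ l ∈ Finset.Icc 1 m,
            (4*((l:ℝ)+1)*((l:ℝ) + (Module.finrank ℝ (V j) : ℝ)/2))) * ‖proj (V j) x‖ ^ 2) := by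
          rw [Finset.mul_sum]
          refine Finset.sum_congr rfl fun j _ => ?_
          rw [hω' j, hsplit ((Module.finrank ℝ (V j) : ℝ))]
          ring
      _ = A * ((∏ l ∈ Finset.Icc 1 m, (4*((l:ℝ)+1)*((l:ℝ) + (d:ℝ)/2))) * ‖x‖ ^ 2) := hev
      _ = K0 * ((A * ∏ l ∈ Finset.Icc 1 m, ((l:ℝ) + (d:ℝ)/2)) * ‖x‖ ^ 2) := by
          rw [hsplit ((d:ℝ))]
          ring
end
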